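/- A nonnegative integral n×n matrix in which every row sum and every column sum equals k can be written as a sum of k permutation matrices. -/

import Mathlib

open Finset

/-- A line (vector) of integers is "alternating" in the ASM sense:
all prefix sums are 0 or 1, and the total sum is 1. This is equivalent to the
nonzero entries being ±1, alternating in sign, beginning and ending with +1. -/
def AltLine {n : ℕ} (v : Fin n → ℤ) : Prop :=
  (∀ t : Fin n, (∑ s ∈ Finset.univ.filter (fun s => s ≤ t), v s) = 0 ∨
      (∑ s ∈ Finset.univ.filter (fun s => s ≤ t), v s) = 1) ∧
  (∑ s, v s) = 1

/-- Alternating sign matrix. -/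
def IsAsm {n : ℕ} (A : Matrix (Fin n) (Fin n) ℤ) : Prop :=
  (∀ i, AltLine (fun j => A i j)) ∧ (∀ j, AltLine (fun i => A i j))

/-- Alternating sign hypermatrix: every line in each of the three directions alternates. -/
def IsAshm {n : ℕ} (A : Fin n → Fin n → Fin n → ℤ) : Prop :=
  (∀ j k, AltLine (fun i => A i j k)) ∧
  (∀ i k, AltLine (fun j => A i j k)) ∧
  (∀ i j, AltLine (fun k => A i j k))

/-- The ASHM-Latin square `L(A) = 1·A₁ + 2·A₂ + ⋯ + n·Aₙ` (planes indexed from 1). -/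
def Lmat {n : ℕ} (A : Fin n → Fin n → Fin n → ℤ) (i j : Fin n) : ℤ :=
  ∑ k : Fin n, ((k.1 : ℤ) + 1) * A i j k

theorem stmt15 {n k : ℕ} (A : Matrix (Fin n) (Fin n) ℕ)
    (hrow : ∀ i : Fin n, (∑ j : Fin n, A i j) = k)
    (hcol : ∀ j : Fin n, (∑ i : Fin n, A i j) = k) :
    ∃ P : Fin k → Equiv.Perm (Fin n), ∀ i j : Fin n,
      A i j = ∑ t : Fin k, (if P t i = j then 1 else 0) := by
  induction k generalizing A with
  | zero =>
    refine ⟨Fin.elim0, fun i j => ?_⟩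
    have h0 : A i j = 0 :=
      Finset.sum_eq_zero_iff.mp (hrow i) j (Finset.mem_univ j)
    simp [h0]
  | succ k ih =>
    classical
    set t : Fin n → Finset (Fin n) := fun i => univ.filter (fun j => 0 < A i j) with ht
    have hall : ∀ s : Finset (Fin n), s.card ≤ (s.biUnion t).card := by
      intro s
      have hz : ∀ i ∈ s, ∀ j, j ∉ s.biUnion t → A i j = 0 := by
        intro i hi j hj
        by_contra h
        exact hj (Finset.mem_biUnion.mpr ⟨i, hi, by simp [ht, Nat.pos_of_ne_zero h]⟩)
      have h1 : (k+1) * s.card = ∑ i ∈ s, ∑ j ∈ s.biUnion t, A i j := by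
        have heach : ∀ i ∈ s, ∑ j ∈ s.biUnion t, A i j = k+1 := by
          intro i hi
          rw [Finset.sum_subset (Finset.subset_univ (s.biUnion t))
            (fun j _ hj => hz i hi j hj)]
          exact hrow i
        rw [Finset.sum_congr rfl heach]
        simp [mul_comm]
      have h2 : ∑ i ∈ s, ∑ j ∈ s.biUnion t, A i j ≤ (k+1) * (s.biUnion t).card := by
        rw [Finset.sum_comm (f := fun i j => A i j)]
        calc ∑ j ∈ s.biUnion t, ∑ i ∈ s, A i j
            ≤ ∑ j ∈ s.biUnion t, ∑ i, A i j := by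
              refine Finset.sum_le_sum fun j _ => ?_
              exact Finset.sum_le_sum_of_subset (Finset.subset_univ s)
          _ = (k+1) * (s.biUnion t).card := by simp [hcol, mul_comm]
      have := h1 ▸ h2
      exact Nat.le_of_mul_le_mul_left this (Nat.succ_pos k)
    obtain ⟨f, hfinj, hf⟩ := (Finset.all_card_le_biUnion_card_iff_exists_injective t).mp hall
    let σ : Equiv.Perm (Fin n) := Equiv.ofBijective f (Finite.injective_iff_bijective.mp hfinj)
    have hσ : ∀ i, 0 < A i (σ i) := by
      intro i
      have := hf i
      simpa [ht, σ] using this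
    have hle : ∀ i j, (if σ i = j then 1 else 0) ≤ A i j := by
      intro i j
      split
      · next h => exact h ▸ hσ i
      · exact Nat.zero_le _
    set A' : Matrix (Fin n) (Fin n) ℕ := fun i j => A i j - (if σ i = j then 1 else 0) with hA'
    have hAdd : ∀ i j, A i j = A' i j + (if σ i = j then 1 else 0) := by
      intro i j
      rw [hA']
      exact (Nat.sub_add_cancel (hle i j)).symm
    have hrow' : ∀ i, (∑ j, A' i j) = k := by
      intro i
      have h1 : (∑ j, A i j) = (∑ j, A' i j) + ∑ j, (if σ i = j then 1 else 0) := by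
        rw [← Finset.sum_add_distrib]
        exact Finset.sum_congr rfl fun j _ => hAdd i j
      have h2 : (∑ j, (if σ i = j then 1 else 0)) = 1 := by simp
      have := hrow i
      omega
    have hcol' : ∀ j, (∑ i, A' i j) = k := by
      intro j
      have h1 : (∑ i, A i j) = (∑ i, A' i j) + ∑ i, (if σ i = j then 1 else 0) := by
        rw [← Finset.sum_add_distrib]
        exact Finset.sum_congr rfl fun i _ => hAdd i j
      have h2 : (∑ i, (if σ i = j then 1 else 0)) = 1 := by
        rw [Finset.sum_congr rfl (fun i _ => by
          rw [show (if σ i = j then 1 else 0) = (if i = σ.symm j then (1:ℕ) else 0) from by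
            simp [Equiv.eq_symm_apply, eq_comm]])]
        simp
      have := hcol j
      omega
    obtain ⟨P', hP'⟩ := ih A' hrow' hcol'
    refine ⟨Fin.cons σ P', fun i j => ?_⟩
    rw [Fin.sum_univ_succ]
    simp only [Fin.cons_zero, Fin.cons_succ]
    rw [← hP' i j, hAdd i j]
    omega
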